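/- Let C be a ribbon Ab-category with ground ring K = End(1), let I be an ideal of C, and let {t_V}_{V ∈ I} be a trace on I. Then for every V in I, the linear map t_V : End(V) → K is an ambidextrous trace on V, i.e. t_V(tr_L(f)) = t_V(tr_R(f)) for all f ∈ End(V ⊗ V). -/

import Mathlib

open CategoryTheory MonoidalCategory

universe v u

variable {C : Type u} [Category.{v} C] [MonoidalCategory C]
  [BraidedCategory C] [RightRigidCategory C]

/-- A twist, making `C` into a ribbon category. -/
class RibbonTwist (C : Type u) [Category.{v} C] [MonoidalCategory C]
    [BraidedCategory C] [RightRigidCategory C] where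
  θ : ∀ V : C, V ⟶ V
  θ_isIso : ∀ V : C, IsIso (θ V)
  θ_natural : ∀ {V W : C} (f : V ⟶ W), f ≫ θ W = θ V ≫ f
  θ_tensor : ∀ V W : C, θ (V ⊗ W) = (θ V ⊗ₘ θ W) ≫ (β_ V W).hom ≫ (β_ W V).hom
  θ_dual : ∀ V : C, θ (Vᘁ) = (θ V)ᘁ

variable [RibbonTwist C]

open RibbonTwist

/-- The morphism `b'_V : 𝟙 ⟶ V* ⊗ V`. -/
noncomputable def coev' (V : C) : 𝟙_ C ⟶ Vᘁ ⊗ V :=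
  η_ V (Vᘁ) ≫ (β_ V (Vᘁ)).hom ≫ ((Vᘁ) ◁ θ V)

/-- The morphism `d'_V : V ⊗ V* ⟶ 𝟙`. -/
noncomputable def ev' (V : C) : V ⊗ (Vᘁ) ⟶ 𝟙_ C :=
  (θ V ▷ (Vᘁ)) ≫ (β_ V (Vᘁ)).hom ≫ ε_ V (Vᘁ)

/-- The left partial trace `tr_L`. -/
noncomputable def trL {V W : C} (f : V ⊗ W ⟶ V ⊗ W) : W ⟶ W :=
  (λ_ W).inv ≫ (coev' V ▷ W) ≫ (α_ _ _ _).hom ≫ ((Vᘁ) ◁ f) ≫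
    (α_ _ _ _).inv ≫ ((ε_ V (Vᘁ)) ▷ W) ≫ (λ_ W).hom

/-- The right partial trace `tr_R`. -/
noncomputable def trR {V W : C} (f : V ⊗ W ⟶ V ⊗ W) : V ⟶ V :=
  (ρ_ V).inv ≫ (V ◁ η_ W (Wᘁ)) ≫ (α_ _ _ _).inv ≫ (f ▷ (Wᘁ)) ≫
    (α_ _ _ _).hom ≫ (V ◁ ev' W) ≫ (ρ_ V).hom

/-- The categorical trace. -/
noncomputable def trC {V : C} (f : V ⟶ V) : 𝟙_ C ⟶ 𝟙_ C :=
  η_ V (Vᘁ) ≫ (f ▷ (Vᘁ)) ≫ ev' V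

/-- `InI V U` : `U` belongs to the ideal `I_V` generated by `V`, i.e. `U` is a
retract of `V ⊗ W` for some `W`. -/
def InI (V U : C) : Prop :=
  ∃ (W : C) (α : U ⟶ V ⊗ W) (β : V ⊗ W ⟶ U), α ≫ β = 𝟙 U

/-- A full subcategory (given by a predicate on objects) is an ideal if it is closed
under tensoring with arbitrary objects and under retracts. -/
structure IsIdeal (P : C → Prop) : Prop where
  tensor_mem : ∀ {V : C}, P V → ∀ W : C, P (V ⊗ W)
  retract_mem : ∀ {V W : C}, P V → ∀ (f : W ⟶ V) (g : V ⟶ W), f ≫ g = 𝟙 W → P W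


/-- A trace on the ideal `P`: a family of linear maps `t_V : End(V) → K`
compatible with partial traces and cyclic. -/
structure TraceOn [Preadditive C] (P : C → Prop) where
  t : ∀ V : C, P V → ((V ⟶ V) →+ (𝟙_ C ⟶ 𝟙_ C))
  tensor_compat : ∀ (U : C) (hU : P U) (W : C) (hUW : P (U ⊗ W)) (f : U ⊗ W ⟶ U ⊗ W),
    t (U ⊗ W) hUW f = t U hU (trR f)
  cyclic : ∀ (U V : C) (hU : P U) (hV : P V) (f : V ⟶ U) (g : U ⟶ V),
    t V hV (f ≫ g) = t U hU (g ≫ f)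

attribute [instance] RibbonTwist.θ_isIso

lemma theta_one : θ (𝟙_ C) = 𝟙 (𝟙_ C) := by
  have h := θ_natural (λ_ (𝟙_ C)).hom
  rw [θ_tensor] at h
  have h2 : (θ (𝟙_ C) ⊗ₘ θ (𝟙_ C)) ≫ (β_ (𝟙_ C) (𝟙_ C)).hom ≫ (β_ (𝟙_ C) (𝟙_ C)).hom ≫
      (λ_ (𝟙_ C)).hom = (λ_ (𝟙_ C)).hom ≫ θ (𝟙_ C) ≫ θ (𝟙_ C) := by
    rw [MonoidalCategory.tensorHom_def]
    simp [braiding_tensorUnit_left, ← unitors_equal, ← unitors_inv_equal]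
  simp only [Category.assoc] at h h2
  rw [h2] at h
  have := (cancel_epi (λ_ (𝟙_ C)).hom).mp h
  exact (cancel_epi (θ (𝟙_ C))).mp (by simpa using this.symm)

variable (V : C)

lemma cup1 : η_ V (Vᘁ) ≫ (β_ V (Vᘁ)).hom ≫ (β_ (Vᘁ) V).hom ≫ (θ V ⊗ₘ θ (Vᘁ)) = η_ V (Vᘁ) := by
  have h := θ_natural (η_ V (Vᘁ))
  rw [θ_tensor, theta_one] at h
  simpa using h

lemma cap1 : (β_ (Vᘁ) V).hom ≫ (β_ V (Vᘁ)).hom ≫ (θ (Vᘁ) ⊗ₘ θ V) ≫ ε_ V (Vᘁ) = ε_ V (Vᘁ) := by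
  have h := θ_natural (ε_ V (Vᘁ))
  rw [θ_tensor, theta_one] at h
  simpa using h.symm

lemma cup_twist : η_ V (Vᘁ) ≫ (θ V ▷ (Vᘁ)) = η_ V (Vᘁ) ≫ (V ◁ θ (Vᘁ)) := by
  rw [θ_dual, coevaluation_comp_rightAdjointMate]

lemma cap_twist : (θ (Vᘁ) ▷ V) ≫ ε_ V (Vᘁ) = ((Vᘁ) ◁ θ V) ≫ ε_ V (Vᘁ) := by
  rw [θ_dual, rightAdjointMate_comp_evaluation]

lemma cupKey : η_ V (Vᘁ) ≫ (β_ (Vᘁ) V).inv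
    = η_ V (Vᘁ) ≫ (β_ V (Vᘁ)).hom ≫ ((Vᘁ) ◁ (θ V ≫ θ V)) := by
  have h1 : η_ V (Vᘁ) ≫ (β_ (Vᘁ) V).inv
      = η_ V (Vᘁ) ≫ (β_ V (Vᘁ)).hom ≫ (θ (Vᘁ) ⊗ₘ θ V) := by
    conv_lhs => rw [← cup1 V]
    simp only [Category.assoc, BraidedCategory.braiding_inv_naturality]
    simp
  rw [h1, MonoidalCategory.tensorHom_def]
  calc η_ V (Vᘁ) ≫ (β_ V (Vᘁ)).hom ≫ (θ (Vᘁ) ▷ V) ≫ ((Vᘁ) ◁ θ V)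
      = η_ V (Vᘁ) ≫ (V ◁ θ (Vᘁ)) ≫ (β_ V (Vᘁ)).hom ≫ ((Vᘁ) ◁ θ V) := by
        rw [BraidedCategory.braiding_naturality_right_assoc]
    _ = η_ V (Vᘁ) ≫ (θ V ▷ (Vᘁ)) ≫ (β_ V (Vᘁ)).hom ≫ ((Vᘁ) ◁ θ V) := by
        rw [← Category.assoc, ← cup_twist, Category.assoc]
    _ = η_ V (Vᘁ) ≫ (β_ V (Vᘁ)).hom ≫ ((Vᘁ) ◁ θ V) ≫ ((Vᘁ) ◁ θ V) := by
        rw [BraidedCategory.braiding_naturality_left_assoc]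
    _ = η_ V (Vᘁ) ≫ (β_ V (Vᘁ)).hom ≫ ((Vᘁ) ◁ (θ V ≫ θ V)) := by
        rw [MonoidalCategory.whiskerLeft_comp]

lemma capKey : (β_ (Vᘁ) V).hom ≫ ((θ V ≫ θ V) ▷ (Vᘁ)) ≫ (β_ V (Vᘁ)).hom ≫ ε_ V (Vᘁ)
    = ε_ V (Vᘁ) := by
  have h1 : ((Vᘁ) ◁ (θ V ≫ θ V)) ≫ ε_ V (Vᘁ) = (θ (Vᘁ) ⊗ₘ θ V) ≫ ε_ V (Vᘁ) := by
    rw [MonoidalCategory.tensorHom_def, Category.assoc, ← whisker_exchange_assoc, cap_twist,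
      ← MonoidalCategory.whiskerLeft_comp_assoc]
  rw [BraidedCategory.braiding_naturality_left_assoc, h1]
  exact cap1 V


lemma lemA : (ρ_ V).inv ≫ (V ◁ η_ V (Vᘁ)) ≫ (α_ V V (Vᘁ)).inv ≫ ((β_ V V).inv ▷ (Vᘁ)) ≫
      (β_ (Vᘁ) (V ⊗ V)).inv
    = (λ_ V).inv ≫ (coev' V ▷ V) ≫ (α_ (Vᘁ) V V).hom ≫ ((Vᘁ) ◁ (θ V ▷ V)) := by
  have step1 : (α_ V V (Vᘁ)).inv ≫ ((β_ V V).inv ▷ (Vᘁ)) ≫ (β_ (Vᘁ) (V ⊗ V)).inv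
      = (β_ (V ⊗ (Vᘁ)) V).inv ≫ ((β_ (Vᘁ) V).inv ▷ V) ≫ (α_ (Vᘁ) V V).hom := by
    rw [BraidedCategory.braiding_tensor_right_inv, BraidedCategory.braiding_tensor_left_inv]
    simp only [Category.assoc]
  rw [step1, BraidedCategory.braiding_inv_naturality_right_assoc]
  calc (ρ_ V).inv ≫ (β_ (𝟙_ C) V).inv ≫ (η_ V (Vᘁ) ▷ V) ≫ ((β_ (Vᘁ) V).inv ▷ V) ≫
        (α_ (Vᘁ) V V).hom
      = (λ_ V).inv ≫ ((η_ V (Vᘁ) ≫ (β_ (Vᘁ) V).inv) ▷ V) ≫ (α_ (Vᘁ) V V).hom := by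
        simp [braiding_inv_tensorUnit_left, comp_whiskerRight]
    _ = (λ_ V).inv ≫ ((η_ V (Vᘁ) ≫ (β_ V (Vᘁ)).hom ≫ ((Vᘁ) ◁ (θ V ≫ θ V))) ▷ V) ≫
        (α_ (Vᘁ) V V).hom := by rw [cupKey]
    _ = (λ_ V).inv ≫ (coev' V ▷ V) ≫ (α_ (Vᘁ) V V).hom ≫ ((Vᘁ) ◁ (θ V ▷ V)) := by
        rw [coev']
        simp only [comp_whiskerRight, Category.assoc, MonoidalCategory.whiskerLeft_comp,
          comp_whiskerRight]
        rw [← associator_naturality_middle]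

lemma lemB : (β_ (Vᘁ) (V ⊗ V)).hom ≫ ((θ V ▷ V) ▷ (Vᘁ)) ≫ ((β_ V V).hom ▷ (Vᘁ)) ≫
      (α_ V V (Vᘁ)).hom ≫ (V ◁ ev' V) ≫ (ρ_ V).hom
    = (α_ (Vᘁ) V V).inv ≫ (ε_ V (Vᘁ) ▷ V) ≫ (λ_ V).hom := by
  have step0 : ((θ V ▷ V) ▷ (Vᘁ)) ≫ ((β_ V V).hom ▷ (Vᘁ))
      = ((β_ V V).hom ▷ (Vᘁ)) ≫ ((V ◁ θ V) ▷ (Vᘁ)) := by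
    rw [← comp_whiskerRight, ← comp_whiskerRight, BraidedCategory.braiding_naturality_left]
  rw [reassoc_of% step0]
  have step1 : ((V ◁ θ V) ▷ (Vᘁ)) ≫ (α_ V V (Vᘁ)).hom ≫ (V ◁ ev' V)
      = (α_ V V (Vᘁ)).hom ≫ (V ◁ (((θ V ≫ θ V) ▷ (Vᘁ)) ≫ (β_ V (Vᘁ)).hom ≫ ε_ V (Vᘁ))) := by
    rw [associator_naturality_middle_assoc, ev']
    simp only [← MonoidalCategory.whiskerLeft_comp, comp_whiskerRight, Category.assoc]
  rw [reassoc_of% step1]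
  have step2 : (β_ (Vᘁ) (V ⊗ V)).hom ≫ ((β_ V V).hom ▷ (Vᘁ)) ≫ (α_ V V (Vᘁ)).hom
      = (α_ (Vᘁ) V V).inv ≫ ((β_ (Vᘁ) V).hom ▷ V) ≫ (β_ (V ⊗ (Vᘁ)) V).hom := by
    rw [BraidedCategory.braiding_tensor_right_hom, BraidedCategory.braiding_tensor_left_hom]
    simp only [Category.assoc]
  rw [reassoc_of% step2]
  have step3 : (β_ (V ⊗ (Vᘁ)) V).hom ≫
        (V ◁ (((θ V ≫ θ V) ▷ (Vᘁ)) ≫ (β_ V (Vᘁ)).hom ≫ ε_ V (Vᘁ)))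
      = ((((θ V ≫ θ V) ▷ (Vᘁ)) ≫ (β_ V (Vᘁ)).hom ≫ ε_ V (Vᘁ)) ▷ V) ≫ (β_ (𝟙_ C) V).hom := by
    rw [BraidedCategory.braiding_naturality_left]
  rw [reassoc_of% step3]
  simp only [comp_whiskerRight, Category.assoc, braiding_tensorUnit_left]
  simp only [Iso.inv_hom_id, Category.comp_id]
  simp only [← comp_whiskerRight_assoc]
  rw [capKey]

lemma key (f : V ⊗ V ⟶ V ⊗ V) :
    trR ((β_ V V).inv ≫ (inv (θ V) ▷ V) ≫ f ≫ (θ V ▷ V) ≫ (β_ V V).hom) = trL f := by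
  unfold trR trL
  simp only [comp_whiskerRight, Category.assoc]
  have hf : f ▷ (Vᘁ) = (β_ (Vᘁ) (V ⊗ V)).inv ≫ ((Vᘁ) ◁ f) ≫ (β_ (Vᘁ) (V ⊗ V)).hom := by
    rw [Iso.eq_inv_comp]
    exact (BraidedCategory.braiding_naturality_right _ f).symm
  rw [hf]
  simp only [Category.assoc]
  rw [BraidedCategory.braiding_inv_naturality_left_assoc, reassoc_of% lemA V]
  simp only [← MonoidalCategory.whiskerLeft_comp_assoc, ← comp_whiskerRight,
    IsIso.hom_inv_id, MonoidalCategory.id_whiskerRight, MonoidalCategory.whiskerLeft_id,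
    Category.id_comp]
  rw [lemB V]
  simp only [← comp_whiskerRight_assoc, IsIso.hom_inv_id, MonoidalCategory.id_whiskerRight,
    Category.id_comp]


theorem stmt3 [Preadditive C] (P : C → Prop) (hP : IsIdeal P) (T : TraceOn P)
    (V : C) (hV : P V) (f : V ⊗ V ⟶ V ⊗ V) :
    T.t V hV (trL f) = T.t V hV (trR f) := by
  have hVV : P (V ⊗ V) := hP.tensor_mem hV V
  rw [← key V f, ← T.tensor_compat V hV V hVV, ← T.tensor_compat V hV V hVV,
    T.cyclic (V ⊗ V) (V ⊗ V) hVV hVV ((β_ V V).inv)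
      ((inv (θ V) ▷ V) ≫ f ≫ (θ V ▷ V) ≫ (β_ V V).hom)]
  simp only [Category.assoc, Iso.hom_inv_id, Category.comp_id]
  rw [T.cyclic (V ⊗ V) (V ⊗ V) hVV hVV ((inv (θ V)) ▷ V) (f ≫ (θ V ▷ V))]
  simp only [Category.assoc, ← comp_whiskerRight, IsIso.hom_inv_id,
    MonoidalCategory.id_whiskerRight, Category.comp_id]
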